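/- Let x : [0,∞) → ℝ^{N+1} be continuously differentiable and satisfy ẋ(t) = A x(t) + B K x(t−τ) for all t ≥ τ. Define V₀(t) = x(t)ᵀP₁x(t), V_S(t) = ∫_{t−τ}^{t} e^{−2δ(t−s)} x(s)ᵀ S x(s) ds, V_R(t) = τ·∫_{−τ}^{0} ∫_{t+θ}^{t} e^{−2δ(t−s)} ẋ(s)ᵀ R ẋ(s) ds dθ, and V₁ = V₀ + V_S + V_R. Then for every t ≥ τ at which V₁ is differentiable, V̇₁(t) + 2δ V₁(t) ≤ ψ(t)ᵀ Φ ψ(t), where ψ(t) = (x(t), ẋ(t), x(t−τ)) ∈ ℝ^{3(N+1)}. -/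

import Mathlib

open Matrix

open Matrix

/-- The diagonal matrix `A = diag(a - λ₀, …, a - λ_N)` with `λₙ = (nπ)²`. -/
noncomputable def Amat (N : ℕ) (a : ℝ) : Matrix (Fin (N + 1)) (Fin (N + 1)) ℝ :=
  Matrix.diagonal fun n : Fin (N + 1) => a - ((n : ℕ) * Real.pi) ^ 2

/-- The column vector `B` with `B₀ = 1` and `Bₙ = (-1)ⁿ√2` for `1 ≤ n ≤ N`. -/
noncomputable def Bmat (N : ℕ) : Matrix (Fin (N + 1)) (Fin 1) ℝ :=
  Matrix.of fun i _ => if (i : ℕ) = 0 then (1 : ℝ) else (-1 : ℝ) ^ (i : ℕ) * Real.sqrt 2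

/-- The symmetric 3(N+1)×3(N+1) block matrix `Φ` from the LMI of Theorem 2 (le2). -/
noncomputable def Phi (N : ℕ) (a δ τ : ℝ) (K : Matrix (Fin 1) (Fin (N + 1)) ℝ)
    (P₁ P₂ P₃ S R : Matrix (Fin (N + 1)) (Fin (N + 1)) ℝ) :
    Matrix (Fin (N + 1) ⊕ (Fin (N + 1) ⊕ Fin (N + 1)))
      (Fin (N + 1) ⊕ (Fin (N + 1) ⊕ Fin (N + 1))) ℝ :=
  let A := Amat N a
  let BK := Bmat N * K
  let Φ11 := Aᵀ * P₂ + P₂ᵀ * A + (2 * δ) • P₁ + S - Real.exp (-2 * δ * τ) • R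
  let Φ12 := P₁ - P₂ᵀ + Aᵀ * P₃
  let Φ13 := Real.exp (-2 * δ * τ) • R + P₂ᵀ * BK
  let Φ22 := -P₃ - P₃ᵀ + τ ^ 2 • R
  let Φ23 := P₃ᵀ * BK
  let Φ33 := -(Real.exp (-2 * δ * τ)) • (S + R)
  Matrix.fromBlocks Φ11 (Matrix.fromCols Φ12 Φ13) (Matrix.fromRows Φ12ᵀ Φ13ᵀ)
    (Matrix.fromBlocks Φ22 Φ23 Φ23ᵀ Φ33)

section Helpers

private lemma uIcc_sub_Ici {c b : ℝ} (hc : 0 ≤ c) (hb : 0 ≤ b) :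
    Set.uIcc c b ⊆ Set.Ici 0 := fun _ hy => le_trans (le_inf hc hb) hy.1

private lemma ftc_right {φ : ℝ → ℝ} (hφ : ContinuousOn φ (Set.Ici 0)) {c b : ℝ}
    (hc : 0 ≤ c) (hb : 0 ≤ b) :
    HasDerivWithinAt (fun u => ∫ s in c..u, φ s) (φ b) (Set.Ici b) b := by
  have hsub : Set.Ioi b ⊆ Set.Ici 0 := fun y hy => le_of_lt (lt_of_le_of_lt hb hy)
  refine intervalIntegral.integral_hasDerivWithinAt_right (t := Set.Ioi b)
    ((hφ.mono (uIcc_sub_Ici hc hb)).intervalIntegrable)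
    ⟨Set.Ici 0, Filter.mem_of_superset self_mem_nhdsWithin hsub,
      (hφ.aestronglyMeasurable measurableSet_Ici)⟩
    ((hφ b hb).mono hsub)

private lemma primitive_contOn {φ : ℝ → ℝ} (hφ : ContinuousOn φ (Set.Ici 0)) :
    ContinuousOn (fun u => ∫ s in (0:ℝ)..u, φ s) (Set.Ici 0) := by
  intro w hw
  have hw0 : (0:ℝ) ≤ w := hw
  have huIcc : Set.uIcc (0:ℝ) (w + 1) = Set.Icc 0 (w + 1) := Set.uIcc_of_le (by linarith)
  have h1 : ContinuousOn (fun u => ∫ s in (0:ℝ)..u, φ s) (Set.uIcc 0 (w + 1)) := by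
    refine intervalIntegral.continuousOn_primitive_interval ?_
    rw [huIcc]
    exact (hφ.mono (Set.Icc_subset_Ici_self)).integrableOn_Icc
  refine (h1 w (by rw [huIcc]; exact ⟨hw0, by linarith⟩)).mono_of_mem_nhdsWithin ?_
  rw [huIcc, ← Set.Ici_inter_Iic]
  exact Filter.inter_mem self_mem_nhdsWithin
    (mem_nhdsWithin_of_mem_nhds (Iic_mem_nhds (by linarith)))

private lemma dot_tr' {n : ℕ} (M : Matrix (Fin n) (Fin n) ℝ) (u v : Fin n → ℝ) :
    u ⬝ᵥ Mᵀ.mulVec v = M.mulVec u ⬝ᵥ v := by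
  rw [Matrix.dotProduct_mulVec, Matrix.vecMul_transpose]

private lemma contOn_coord {n : ℕ} {y : ℝ → Fin n → ℝ} {s : Set ℝ}
    (hy : ContinuousOn y s) (i : Fin n) : ContinuousOn (fun r => y r i) s :=
  (continuous_apply i).comp_continuousOn hy

private lemma contOn_dotc {n : ℕ} {y : ℝ → Fin n → ℝ} {s : Set ℝ}
    (hy : ContinuousOn y s) (w : Fin n → ℝ) :
    ContinuousOn (fun r => y r ⬝ᵥ w) s := by
  simp only [dotProduct]
  exact continuousOn_finset_sum _ fun i _ => (contOn_coord hy i).mul continuousOn_const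

private lemma contOn_quad {n : ℕ} (M : Matrix (Fin n) (Fin n) ℝ) {y : ℝ → Fin n → ℝ}
    {s : Set ℝ} (hy : ContinuousOn y s) :
    ContinuousOn (fun r => y r ⬝ᵥ M.mulVec (y r)) s := by
  simp only [dotProduct, Matrix.mulVec]
  exact continuousOn_finset_sum _ fun i _ => (contOn_coord hy i).mul
    (continuousOn_finset_sum _ fun j _ => continuousOn_const.mul (contOn_coord hy j))

private lemma hasDerivWithinAt_dot {n : ℕ} (M : Matrix (Fin n) (Fin n) ℝ)
    {x y : ℝ → Fin n → ℝ} {u v : Fin n → ℝ} {s : Set ℝ} {t : ℝ}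
    (hx : HasDerivWithinAt x u s t) (hy : HasDerivWithinAt y v s t) :
    HasDerivWithinAt (fun r => x r ⬝ᵥ M.mulVec (y r))
      (u ⬝ᵥ M.mulVec (y t) + x t ⬝ᵥ M.mulVec v) s t := by
  have h : ∀ r, x r ⬝ᵥ M.mulVec (y r) = ∑ i, ∑ j, x r i * (M i j * y r j) := by
    intro r; simp [dotProduct, Matrix.mulVec, Finset.mul_sum]
  have H : HasDerivWithinAt (fun r => ∑ i, ∑ j, x r i * (M i j * y r j))
      (∑ i, ∑ j, (u i * (M i j * y t j) + x t i * (M i j * v j))) s t := by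
    refine HasDerivWithinAt.fun_sum fun i _ => HasDerivWithinAt.fun_sum fun j _ => ?_
    exact (hasDerivWithinAt_pi.1 hx i).mul ((hasDerivWithinAt_pi.1 hy j).const_mul (M i j))
  have e : (∑ i, ∑ j, (u i * (M i j * y t j) + x t i * (M i j * v j)))
      = u ⬝ᵥ M.mulVec (y t) + x t ⬝ᵥ M.mulVec v := by
    simp [dotProduct, Matrix.mulVec, Finset.mul_sum, Finset.sum_add_distrib]
  exact e ▸ (H.congr (fun r _ => h r) (h t))

private lemma integral_dot {n : ℕ} {x x' : ℝ → Fin n → ℝ}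
    (hx : ∀ s, 0 ≤ s → HasDerivAt x (x' s) s) (hx'c : ContinuousOn x' (Set.Ici 0))
    {c t : ℝ} (hc : 0 ≤ c) (hct : c ≤ t) (w : Fin n → ℝ) :
    (∫ s in c..t, x' s ⬝ᵥ w) = (x t - x c) ⬝ᵥ w := by
  have hsub : Set.uIcc c t ⊆ Set.Ici 0 := uIcc_sub_Ici hc (hc.trans hct)
  have hcoord : ∀ i : Fin n, (∫ s in c..t, x' s i) = x t i - x c i := by
    intro i
    refine intervalIntegral.integral_eq_sub_of_hasDerivAt (f := fun r => x r i)
      (fun s hs => ?_) ((contOn_coord (hx'c.mono hsub) i).intervalIntegrable)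
    exact hasDerivAt_pi.1 (hx s (hsub hs)) i
  have hint : ∀ i : Fin n, IntervalIntegrable (fun s => x' s i * w i) MeasureTheory.volume c t :=
    fun i => ((contOn_coord (hx'c.mono hsub) i).mul continuousOn_const).intervalIntegrable
  calc (∫ s in c..t, x' s ⬝ᵥ w) = ∫ s in c..t, ∑ i, x' s i * w i := by
        simp [dotProduct]
    _ = ∑ i, ∫ s in c..t, x' s i * w i := intervalIntegral.integral_finset_sum fun i _ => hint i
    _ = ∑ i, (x t i - x c i) * w i := by
        refine Finset.sum_congr rfl fun i _ => ?_
        rw [intervalIntegral.integral_mul_const, hcoord i]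
    _ = (x t - x c) ⬝ᵥ w := by simp [dotProduct, sub_mul]

private lemma dot_symm {n : ℕ} {R : Matrix (Fin n) (Fin n) ℝ} (hRt : Rᵀ = R)
    (u w : Fin n → ℝ) : u ⬝ᵥ R.mulVec w = w ⬝ᵥ R.mulVec u := by
  conv_lhs => rw [← hRt]
  rw [dot_tr', dotProduct_comm]

private lemma posdef_trans {n : ℕ} {R : Matrix (Fin n) (Fin n) ℝ} (hR : R.PosDef) :
    Rᵀ = R := by
  have := hR.isHermitian.eq
  rwa [Matrix.conjTranspose_eq_transpose_of_trivial] at this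

private lemma quad_nonneg {n : ℕ} {R : Matrix (Fin n) (Fin n) ℝ} (hR : R.PosDef)
    (z : Fin n → ℝ) : 0 ≤ z ⬝ᵥ R.mulVec z := by
  simpa using hR.posSemidef.dotProduct_mulVec_nonneg z

private lemma jensen {n : ℕ} {R : Matrix (Fin n) (Fin n) ℝ} (hR : R.PosDef)
    {x x' : ℝ → Fin n → ℝ}
    (hx : ∀ s, 0 ≤ s → HasDerivAt x (x' s) s) (hx'c : ContinuousOn x' (Set.Ici 0))
    {c t : ℝ} (hc : 0 ≤ c) (hct : c < t) :
    (x t - x c) ⬝ᵥ R.mulVec (x t - x c)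
      ≤ (t - c) * ∫ s in c..t, x' s ⬝ᵥ R.mulVec (x' s) := by
  have hRt : Rᵀ = R := posdef_trans hR
  set τ' : ℝ := t - c with hτ'
  have hτ'pos : 0 < τ' := by simp [hτ']; linarith
  set v : Fin n → ℝ := x t - x c with hv
  have hsub : Set.uIcc c t ⊆ Set.Ici 0 := uIcc_sub_Ici hc (hc.trans hct.le)
  have hx'sub : ContinuousOn x' (Set.uIcc c t) := hx'c.mono hsub
  set J : ℝ := ∫ s in c..t, x' s ⬝ᵥ R.mulVec (x' s) with hJ
  have hexp : ∀ s : ℝ, (τ' • x' s - v) ⬝ᵥ R.mulVec (τ' • x' s - v)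
      = τ' ^ 2 * (x' s ⬝ᵥ R.mulVec (x' s)) - (2 * τ') * (x' s ⬝ᵥ R.mulVec v)
        + v ⬝ᵥ R.mulVec v := by
    intro s
    have h1 : v ⬝ᵥ R.mulVec (x' s) = x' s ⬝ᵥ R.mulVec v := dot_symm hRt _ _
    rw [Matrix.mulVec_sub, Matrix.mulVec_smul, sub_dotProduct,
      dotProduct_sub, dotProduct_sub, smul_dotProduct,
      smul_dotProduct, dotProduct_smul, dotProduct_smul, h1]
    simp only [smul_eq_mul]
    ring
  have hiq : IntervalIntegrable (fun s => x' s ⬝ᵥ R.mulVec (x' s))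
      MeasureTheory.volume c t := (contOn_quad R hx'sub).intervalIntegrable
  have hid : IntervalIntegrable (fun s => x' s ⬝ᵥ R.mulVec v) MeasureTheory.volume c t :=
    (contOn_dotc hx'sub _).intervalIntegrable
  have h0 : (0:ℝ) ≤ ∫ s in c..t, (τ' • x' s - v) ⬝ᵥ R.mulVec (τ' • x' s - v) :=
    intervalIntegral.integral_nonneg hct.le (fun s _ => quad_nonneg hR _)
  have hval : (∫ s in c..t, (τ' • x' s - v) ⬝ᵥ R.mulVec (τ' • x' s - v))
      = τ' ^ 2 * J - (2 * τ') * (v ⬝ᵥ R.mulVec v) + τ' * (v ⬝ᵥ R.mulVec v) := by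
    calc (∫ s in c..t, (τ' • x' s - v) ⬝ᵥ R.mulVec (τ' • x' s - v))
        = ∫ s in c..t, (τ' ^ 2 * (x' s ⬝ᵥ R.mulVec (x' s))
            - (2 * τ') * (x' s ⬝ᵥ R.mulVec v) + v ⬝ᵥ R.mulVec v) := by
          exact intervalIntegral.integral_congr fun s _ => hexp s
      _ = ((∫ s in c..t, τ' ^ 2 * (x' s ⬝ᵥ R.mulVec (x' s)))
            - ∫ s in c..t, (2 * τ') * (x' s ⬝ᵥ R.mulVec v))
            + ∫ s in c..t, (v ⬝ᵥ R.mulVec v : ℝ) := by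
          rw [intervalIntegral.integral_add ((hiq.const_mul _).sub (hid.const_mul _))
            intervalIntegrable_const, intervalIntegral.integral_sub (hiq.const_mul _)
            (hid.const_mul _)]
      _ = τ' ^ 2 * J - (2 * τ') * (v ⬝ᵥ R.mulVec v) + τ' * (v ⬝ᵥ R.mulVec v) := by
          rw [intervalIntegral.integral_const_mul, intervalIntegral.integral_const_mul,
            intervalIntegral.integral_const, integral_dot hx hx'c hc hct.le, smul_eq_mul]
  rw [hval] at h0
  nlinarith [quad_nonneg hR v, hτ'pos]

private lemma keyAlg {n : ℕ} (A BK P₁ P₂ P₃ S R : Matrix (Fin n) (Fin n) ℝ)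
    (hP : P₁ᵀ = P₁) (hRt : Rᵀ = R) (E d τ : ℝ) (X Y Z : Fin n → ℝ) :
    Sum.elim X (Sum.elim Y Z) ⬝ᵥ
      (Matrix.fromBlocks (Aᵀ * P₂ + P₂ᵀ * A + d • P₁ + S - E • R)
        (Matrix.fromCols (P₁ - P₂ᵀ + Aᵀ * P₃) (E • R + P₂ᵀ * BK))
        (Matrix.fromRows (P₁ - P₂ᵀ + Aᵀ * P₃)ᵀ (E • R + P₂ᵀ * BK)ᵀ)
        (Matrix.fromBlocks (-P₃ - P₃ᵀ + τ ^ 2 • R) (P₃ᵀ * BK) (P₃ᵀ * BK)ᵀ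
          (-E • (S + R)))).mulVec (Sum.elim X (Sum.elim Y Z))
    = Y ⬝ᵥ P₁.mulVec X + X ⬝ᵥ P₁.mulVec Y + d * (X ⬝ᵥ P₁.mulVec X)
      + X ⬝ᵥ S.mulVec X - E * (Z ⬝ᵥ S.mulVec Z) + τ ^ 2 * (Y ⬝ᵥ R.mulVec Y)
      - E * ((X - Z) ⬝ᵥ R.mulVec (X - Z))
      + 2 * ((P₂.mulVec X + P₃.mulVec Y) ⬝ᵥ (A.mulVec X + BK.mulVec Z - Y)) := by
  simp only [Matrix.fromBlocks_mulVec, Matrix.fromCols_mulVec_sumElim,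
    Matrix.fromRows_mulVec, sumElim_dotProduct_sumElim, Sum.elim_comp_inl,
    Sum.elim_comp_inr, Matrix.transpose_add,
    Matrix.transpose_sub, Matrix.transpose_mul, Matrix.transpose_transpose,
    Matrix.transpose_smul, Matrix.transpose_neg, Matrix.add_mulVec, Matrix.sub_mulVec,
    Matrix.neg_mulVec, Matrix.smul_mulVec, ← Matrix.mulVec_mulVec,
    dotProduct_add, dotProduct_sub, dotProduct_neg,
    dotProduct_smul, add_dotProduct, sub_dotProduct,
    neg_dotProduct, Matrix.mulVec_add, Matrix.mulVec_sub, smul_eq_mul, hP, hRt,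
    dot_tr']
  rw [dotProduct_comm (A *ᵥ X) (P₂ *ᵥ X), dotProduct_comm (A *ᵥ X) (P₃ *ᵥ Y),
    dotProduct_comm Y (P₂ *ᵥ X), dotProduct_comm (BK *ᵥ Z) (P₂ *ᵥ X),
    dotProduct_comm Y (P₃ *ᵥ Y), dotProduct_comm (BK *ᵥ Z) (P₃ *ᵥ Y)]
  ring

private lemma keyAlgPhi (N : ℕ) (a δ τ : ℝ) (K : Matrix (Fin 1) (Fin (N + 1)) ℝ)
    (P₁ P₂ P₃ S R : Matrix (Fin (N + 1)) (Fin (N + 1)) ℝ)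
    (hP : P₁ᵀ = P₁) (hRt : Rᵀ = R) (X Y Z : Fin (N + 1) → ℝ)
    (hY : (Amat N a).mulVec X + (Bmat N * K).mulVec Z - Y = 0) :
    Sum.elim X (Sum.elim Y Z) ⬝ᵥ
      (Phi N a δ τ K P₁ P₂ P₃ S R).mulVec (Sum.elim X (Sum.elim Y Z))
    = Y ⬝ᵥ P₁.mulVec X + X ⬝ᵥ P₁.mulVec Y + 2 * δ * (X ⬝ᵥ P₁.mulVec X)
      + X ⬝ᵥ S.mulVec X - Real.exp (-2 * δ * τ) * (Z ⬝ᵥ S.mulVec Z)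
      + τ ^ 2 * (Y ⬝ᵥ R.mulVec Y)
      - Real.exp (-2 * δ * τ) * ((X - Z) ⬝ᵥ R.mulVec (X - Z)) := by
  have h := keyAlg (Amat N a) (Bmat N * K) P₁ P₂ P₃ S R hP hRt
    (Real.exp (-2 * δ * τ)) (2 * δ) τ X Y Z
  rw [hY, dotProduct_zero, mul_zero, add_zero] at h
  exact h

end Helpers

/-- along any C¹ solution of the delay ODE, the Lyapunov–Krasovskii
functional `V₁ = V₀ + V_S + V_R` satisfies `V̇₁(t) + 2δV₁(t) ≤ ψ(t)ᵀ Φ ψ(t)` at every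
`t ≥ τ` where `V₁` is differentiable, with `ψ(t) = (x(t), ẋ(t), x(t-τ))`. -/
theorem stmt2 (N : ℕ) (a δ τ : ℝ) (hδ : 0 < δ) (hτ : 0 < τ)
    (K : Matrix (Fin 1) (Fin (N + 1)) ℝ)
    (P₁ P₂ P₃ S R : Matrix (Fin (N + 1)) (Fin (N + 1)) ℝ)
    (hP₁ : P₁.PosDef) (hS : S.PosDef) (hR : R.PosDef)
    (x x' : ℝ → (Fin (N + 1) → ℝ))
    (hx : ∀ t, 0 ≤ t → HasDerivAt x (x' t) t)
    (hx' : ContinuousOn x' (Set.Ici 0))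
    (hode : ∀ t, τ ≤ t → x' t = (Amat N a).mulVec (x t) + (Bmat N * K).mulVec (x (t - τ)))
    (V₁ : ℝ → ℝ)
    (hV₁ : V₁ = fun t =>
      x t ⬝ᵥ P₁.mulVec (x t)
        + (∫ s in (t - τ)..t, Real.exp (-2 * δ * (t - s)) * (x s ⬝ᵥ S.mulVec (x s)))
        + τ * ∫ θ in (-τ)..(0 : ℝ),
            ∫ s in (t + θ)..t, Real.exp (-2 * δ * (t - s)) * (x' s ⬝ᵥ R.mulVec (x' s)))
    (t : ℝ) (ht : τ ≤ t) (hdiff : DifferentiableAt ℝ V₁ t) :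
    deriv V₁ t + 2 * δ * V₁ t ≤
      (Sum.elim (x t) (Sum.elim (x' t) (x (t - τ)))) ⬝ᵥ
        (Phi N a δ τ K P₁ P₂ P₃ S R).mulVec
          (Sum.elim (x t) (Sum.elim (x' t) (x (t - τ)))) := by
  have hτt : 0 < t := lt_of_lt_of_le hτ ht
  have ht0 : (0:ℝ) ≤ t := hτt.le
  set c : ℝ := t - τ with hcdef
  have hc0 : 0 ≤ c := by rw [hcdef]; linarith
  have hct : c < t := by rw [hcdef]; linarith
  have hxC : ContinuousOn x (Set.Ici 0) :=
    fun s hs => ((hx s hs).continuousAt).continuousWithinAt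
  set φS : ℝ → ℝ := fun s => Real.exp (2 * δ * s) * (x s ⬝ᵥ S.mulVec (x s)) with hφS
  set φR : ℝ → ℝ := fun s => Real.exp (2 * δ * s) * (x' s ⬝ᵥ R.mulVec (x' s)) with hφR
  have hexpC : Continuous (fun s : ℝ => Real.exp (2 * δ * s)) :=
    Real.continuous_exp.comp (continuous_const.mul continuous_id)
  have hgC : ContinuousOn (fun s => x' s ⬝ᵥ R.mulVec (x' s)) (Set.Ici 0) := contOn_quad R hx'
  have hφSC : ContinuousOn φS (Set.Ici 0) := hexpC.continuousOn.mul (contOn_quad S hxC)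
  have hφRC : ContinuousOn φR (Set.Ici 0) := hexpC.continuousOn.mul hgC
  set G : ℝ → ℝ := fun u => ∫ s in (0:ℝ)..u, φS s with hG
  set H : ℝ → ℝ := fun u => ∫ s in (0:ℝ)..u, φR s with hH
  have hHC : ContinuousOn H (Set.Ici 0) := primitive_contOn hφRC
  set KK : ℝ → ℝ := fun w => ∫ u in c..w, H u with hKK
  -- rewriting V₁ on Ici t
  have hVW : ∀ r ∈ Set.Ici t, V₁ r
      = x r ⬝ᵥ P₁.mulVec (x r) + Real.exp (-2 * δ * r) * (G r - G (r - τ))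
        + τ * (Real.exp (-2 * δ * r) * (τ * H r - (KK r - KK (r - τ)))) := by
    intro r hr
    have hrt : t ≤ r := hr
    have hr0 : (0:ℝ) ≤ r := le_trans ht0 hrt
    have hrτ : (0:ℝ) ≤ r - τ := by linarith
    have hintS_r : IntervalIntegrable φS MeasureTheory.volume 0 r :=
      (hφSC.mono (uIcc_sub_Ici le_rfl hr0)).intervalIntegrable
    have hintS_rτ : IntervalIntegrable φS MeasureTheory.volume 0 (r - τ) :=
      (hφSC.mono (uIcc_sub_Ici le_rfl hrτ)).intervalIntegrable
    have hintH_r : IntervalIntegrable H MeasureTheory.volume c r :=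
      (hHC.mono (uIcc_sub_Ici hc0 hr0)).intervalIntegrable
    have hintH_rτ : IntervalIntegrable H MeasureTheory.volume c (r - τ) :=
      (hHC.mono (uIcc_sub_Ici hc0 hrτ)).intervalIntegrable
    have hSpart : (∫ s in (r - τ)..r, Real.exp (-2 * δ * (r - s)) * (x s ⬝ᵥ S.mulVec (x s)))
        = Real.exp (-2 * δ * r) * (G r - G (r - τ)) := by
      rw [show G r - G (r - τ) = ∫ s in (r - τ)..r, φS s from
        intervalIntegral.integral_interval_sub_left hintS_r hintS_rτ,
        ← intervalIntegral.integral_const_mul]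
      refine intervalIntegral.integral_congr fun s _ => ?_
      simp only [hφS]
      rw [show -2 * δ * (r - s) = -2 * δ * r + 2 * δ * s by ring, Real.exp_add]
      ring
    have hRinner : ∀ θ ∈ Set.uIcc (-τ) (0:ℝ),
        (∫ s in (r + θ)..r, Real.exp (-2 * δ * (r - s)) * (x' s ⬝ᵥ R.mulVec (x' s)))
        = Real.exp (-2 * δ * r) * H r - Real.exp (-2 * δ * r) * H (r + θ) := by
      intro θ hθ
      rw [Set.uIcc_of_le (by linarith : -τ ≤ (0:ℝ))] at hθ
      have h0θ : (0:ℝ) ≤ r + θ := by have := hθ.1; linarith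
      have hint1 : IntervalIntegrable φR MeasureTheory.volume 0 r :=
        (hφRC.mono (uIcc_sub_Ici le_rfl hr0)).intervalIntegrable
      have hint2 : IntervalIntegrable φR MeasureTheory.volume 0 (r + θ) :=
        (hφRC.mono (uIcc_sub_Ici le_rfl h0θ)).intervalIntegrable
      rw [← mul_sub, show H r - H (r + θ) = ∫ s in (r + θ)..r, φR s from
        intervalIntegral.integral_interval_sub_left hint1 hint2,
        ← intervalIntegral.integral_const_mul]
      refine intervalIntegral.integral_congr fun s _ => ?_
      simp only [hφR]
      rw [show -2 * δ * (r - s) = -2 * δ * r + 2 * δ * s by ring, Real.exp_add]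
      ring
    have hHshift : ContinuousOn (fun θ : ℝ => H (r + θ)) (Set.uIcc (-τ) 0) := by
      refine hHC.comp ((continuous_const.add continuous_id).continuousOn) ?_
      intro θ hθ
      rw [Set.uIcc_of_le (by linarith : -τ ≤ (0:ℝ))] at hθ
      have := hθ.1
      exact (by simp; linarith : (r + θ) ∈ Set.Ici (0:ℝ))
    have hRpart : (∫ θ in (-τ)..(0:ℝ),
        ∫ s in (r + θ)..r, Real.exp (-2 * δ * (r - s)) * (x' s ⬝ᵥ R.mulVec (x' s)))
        = Real.exp (-2 * δ * r) * (τ * H r - (KK r - KK (r - τ))) := by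
      rw [intervalIntegral.integral_congr hRinner,
        intervalIntegral.integral_sub (g := fun θ => Real.exp (-2 * δ * r) * H (r + θ)) intervalIntegrable_const
          ((continuousOn_const.mul hHshift).intervalIntegrable),
        intervalIntegral.integral_const, intervalIntegral.integral_const_mul,
        intervalIntegral.integral_comp_add_left H r, add_zero,
        show r + -τ = r - τ by ring,
        show (∫ u in (r - τ)..r, H u) = KK r - KK (r - τ) from
          (intervalIntegral.integral_interval_sub_left hintH_r hintH_rτ).symm]
      simp only [smul_eq_mul, sub_neg_eq_add, zero_add]
      ring
    rw [hV₁]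
    simp only
    rw [hSpart, hRpart]
  -- derivative of the rewritten function
  have hxt : HasDerivAt x (x' t) t := hx t ht0
  have hdot : HasDerivWithinAt (fun r => x r ⬝ᵥ P₁.mulVec (x r))
      (x' t ⬝ᵥ P₁.mulVec (x t) + x t ⬝ᵥ P₁.mulVec (x' t)) (Set.Ici t) t :=
    hasDerivWithinAt_dot P₁ hxt.hasDerivWithinAt hxt.hasDerivWithinAt
  have hmaps : Set.MapsTo (fun r : ℝ => r - τ) (Set.Ici t) (Set.Ici c) :=
    fun r hr => sub_le_sub_right hr τ
  have hsubτ : HasDerivWithinAt (fun r : ℝ => r - τ) 1 (Set.Ici t) t :=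
    ((hasDerivAt_id t).sub_const τ).hasDerivWithinAt
  have hGt : HasDerivWithinAt G (φS t) (Set.Ici t) t := ftc_right hφSC le_rfl ht0
  have hGc : HasDerivWithinAt (fun r => G (r - τ)) (φS c * 1) (Set.Ici t) t :=
    HasDerivWithinAt.comp t (ftc_right hφSC le_rfl hc0) hsubτ hmaps
  have hHt : HasDerivWithinAt H (φR t) (Set.Ici t) t := ftc_right hφRC le_rfl ht0
  have hKt : HasDerivWithinAt KK (H t) (Set.Ici t) t := ftc_right hHC hc0 ht0
  have hKc : HasDerivWithinAt (fun r => KK (r - τ)) (H c * 1) (Set.Ici t) t :=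
    HasDerivWithinAt.comp t (ftc_right hHC hc0 hc0) hsubτ hmaps
  have hexpd : HasDerivWithinAt (fun r : ℝ => Real.exp (-2 * δ * r))
      (Real.exp (-2 * δ * t) * (-2 * δ)) (Set.Ici t) t := by
    have h1 : HasDerivAt (fun r : ℝ => -2 * δ * r) (-2 * δ) t := by
      simpa using (hasDerivAt_id t).const_mul (-2 * δ)
    exact h1.exp.hasDerivWithinAt
  have hW : HasDerivWithinAt (fun r =>
      x r ⬝ᵥ P₁.mulVec (x r) + Real.exp (-2 * δ * r) * (G r - G (r - τ))
        + τ * (Real.exp (-2 * δ * r) * (τ * H r - (KK r - KK (r - τ)))))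
      ((x' t ⬝ᵥ P₁.mulVec (x t) + x t ⬝ᵥ P₁.mulVec (x' t))
        + (Real.exp (-2 * δ * t) * (-2 * δ) * (G t - G (t - τ))
          + Real.exp (-2 * δ * t) * (φS t - φS c * 1))
        + τ * (Real.exp (-2 * δ * t) * (-2 * δ) * (τ * H t - (KK t - KK (t - τ)))
          + Real.exp (-2 * δ * t) * (τ * φR t - (H t - H c * 1)))) (Set.Ici t) t :=
    (hdot.add (hexpd.mul (hGt.sub hGc))).add
      ((hexpd.mul ((hHt.const_mul τ).sub (hKt.sub hKc))).const_mul τ)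
  have huniq : UniqueDiffWithinAt ℝ (Set.Ici t) t := uniqueDiffOn_Ici t t Set.self_mem_Ici
  have hV₁W : HasDerivWithinAt V₁
      ((x' t ⬝ᵥ P₁.mulVec (x t) + x t ⬝ᵥ P₁.mulVec (x' t))
        + (Real.exp (-2 * δ * t) * (-2 * δ) * (G t - G (t - τ))
          + Real.exp (-2 * δ * t) * (φS t - φS c * 1))
        + τ * (Real.exp (-2 * δ * t) * (-2 * δ) * (τ * H t - (KK t - KK (t - τ)))
          + Real.exp (-2 * δ * t) * (τ * φR t - (H t - H c * 1)))) (Set.Ici t) t :=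
    hW.congr (fun r hr => hVW r hr) (hVW t Set.self_mem_Ici)
  have hderiv : deriv V₁ t
      = (x' t ⬝ᵥ P₁.mulVec (x t) + x t ⬝ᵥ P₁.mulVec (x' t))
        + (Real.exp (-2 * δ * t) * (-2 * δ) * (G t - G (t - τ))
          + Real.exp (-2 * δ * t) * (φS t - φS c * 1))
        + τ * (Real.exp (-2 * δ * t) * (-2 * δ) * (τ * H t - (KK t - KK (t - τ)))
          + Real.exp (-2 * δ * t) * (τ * φR t - (H t - H c * 1))) := by
    have e1 := hV₁W.derivWithin huniq
    have e2 := (hdiff.hasDerivAt.hasDerivWithinAt (s := Set.Ici t)).derivWithin huniq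
    rw [← e1, ← e2]
  -- the key integral inequality
  have hint0t : IntervalIntegrable φR MeasureTheory.volume 0 t :=
    (hφRC.mono (uIcc_sub_Ici le_rfl ht0)).intervalIntegrable
  have hint0c : IntervalIntegrable φR MeasureTheory.volume 0 c :=
    (hφRC.mono (uIcc_sub_Ici le_rfl hc0)).intervalIntegrable
  have hgsub : ContinuousOn (fun s => x' s ⬝ᵥ R.mulVec (x' s)) (Set.uIcc c t) :=
    hgC.mono (uIcc_sub_Ici hc0 ht0)
  have hHtc : H t - H c = ∫ s in c..t, φR s :=
    intervalIntegral.integral_interval_sub_left hint0t hint0c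
  have hJexp : Real.exp (-2 * δ * t) * (H t - H c)
      = ∫ s in c..t, Real.exp (-2 * δ * (t - s)) * (x' s ⬝ᵥ R.mulVec (x' s)) := by
    rw [hHtc, ← intervalIntegral.integral_const_mul]
    refine intervalIntegral.integral_congr fun s _ => ?_
    simp only [hφR]
    rw [show -2 * δ * (t - s) = -2 * δ * t + 2 * δ * s by ring, Real.exp_add]
    ring
  have hmono : Real.exp (-2 * δ * τ) * (∫ s in c..t, x' s ⬝ᵥ R.mulVec (x' s))
      ≤ ∫ s in c..t, Real.exp (-2 * δ * (t - s)) * (x' s ⬝ᵥ R.mulVec (x' s)) := by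
    rw [← intervalIntegral.integral_const_mul]
    refine intervalIntegral.integral_mono_on hct.le
      ((continuousOn_const.mul hgsub).intervalIntegrable)
      (((Real.continuous_exp.comp (continuous_const.mul
        (continuous_const.sub continuous_id))).continuousOn.mul hgsub).intervalIntegrable)
      (fun s hs => ?_)
    have hg0 : 0 ≤ x' s ⬝ᵥ R.mulVec (x' s) := quad_nonneg hR _
    have hee : Real.exp (-2 * δ * τ) ≤ Real.exp (-2 * δ * (t - s)) := by
      apply Real.exp_le_exp.2
      have h1 : s ∈ Set.Icc c t := hs
      have := h1.1
      nlinarith [hδ.le]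
    exact mul_le_mul_of_nonneg_right hee hg0
  have htc : t - c = τ := by rw [hcdef]; ring
  have hjen := jensen hR hx hx' hc0 hct
  rw [htc] at hjen
  have hIneq : Real.exp (-2 * δ * τ) * ((x t - x c) ⬝ᵥ R.mulVec (x t - x c))
      ≤ τ * (Real.exp (-2 * δ * t) * (H t - H c)) := by
    calc Real.exp (-2 * δ * τ) * ((x t - x c) ⬝ᵥ R.mulVec (x t - x c))
        ≤ Real.exp (-2 * δ * τ) * (τ * ∫ s in c..t, x' s ⬝ᵥ R.mulVec (x' s)) :=
          mul_le_mul_of_nonneg_left hjen (Real.exp_nonneg _)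
      _ = τ * (Real.exp (-2 * δ * τ) * ∫ s in c..t, x' s ⬝ᵥ R.mulVec (x' s)) := by ring
      _ ≤ τ * ∫ s in c..t, Real.exp (-2 * δ * (t - s)) * (x' s ⬝ᵥ R.mulVec (x' s)) :=
          mul_le_mul_of_nonneg_left hmono hτ.le
      _ = τ * (Real.exp (-2 * δ * t) * (H t - H c)) := by rw [hJexp]
  -- scalar identities
  have eS : Real.exp (-2 * δ * t) * φS t = x t ⬝ᵥ S.mulVec (x t) := by
    simp only [hφS]
    rw [← mul_assoc, ← Real.exp_add, show -2 * δ * t + 2 * δ * t = 0 by ring,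
      Real.exp_zero, one_mul]
  have eSc : Real.exp (-2 * δ * t) * φS c
      = Real.exp (-2 * δ * τ) * (x c ⬝ᵥ S.mulVec (x c)) := by
    simp only [hφS]
    rw [← mul_assoc, ← Real.exp_add, show -2 * δ * t + 2 * δ * c = -2 * δ * τ by
      rw [hcdef]; ring]
  have eR : Real.exp (-2 * δ * t) * φR t = x' t ⬝ᵥ R.mulVec (x' t) := by
    simp only [hφR]
    rw [← mul_assoc, ← Real.exp_add, show -2 * δ * t + 2 * δ * t = 0 by ring,
      Real.exp_zero, one_mul]
  -- assemble
  have hODE0 : (Amat N a).mulVec (x t) + (Bmat N * K).mulVec (x c) - x' t = 0 := by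
    rw [hode t ht]
    simp [hcdef]
  rw [hderiv, hVW t Set.self_mem_Ici,
    keyAlgPhi N a δ τ K P₁ P₂ P₃ S R (posdef_trans hP₁) (posdef_trans hR)
      (x t) (x' t) (x c) hODE0]
  have heq : (x' t ⬝ᵥ P₁.mulVec (x t) + x t ⬝ᵥ P₁.mulVec (x' t))
        + (Real.exp (-2 * δ * t) * (-2 * δ) * (G t - G (t - τ))
          + Real.exp (-2 * δ * t) * (φS t - φS c * 1))
        + τ * (Real.exp (-2 * δ * t) * (-2 * δ) * (τ * H t - (KK t - KK (t - τ)))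
          + Real.exp (-2 * δ * t) * (τ * φR t - (H t - H c * 1)))
        + 2 * δ * (x t ⬝ᵥ P₁.mulVec (x t) + Real.exp (-2 * δ * t) * (G t - G (t - τ))
          + τ * (Real.exp (-2 * δ * t) * (τ * H t - (KK t - KK (t - τ)))))
      = (x' t ⬝ᵥ P₁.mulVec (x t) + x t ⬝ᵥ P₁.mulVec (x' t))
        + 2 * δ * (x t ⬝ᵥ P₁.mulVec (x t))
        + (Real.exp (-2 * δ * t) * φS t) - (Real.exp (-2 * δ * t) * φS c)
        + τ ^ 2 * (Real.exp (-2 * δ * t) * φR t)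
        - τ * (Real.exp (-2 * δ * t) * (H t - H c)) := by ring
  rw [heq, eS, eSc, eR]
  linarith [hIneq]
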